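/- In the soliton-limit setting, the period Ξ(μ) := ∫_{v₂(μ)}^{v₃(μ)} √(2κ(v)/(μ − W(v))) dv satisfies the asymptotics: there exist μ̄ ∈ (μ₀, μ_s) and C > 0 such that for all μ ∈ (μ̄, μ_s), |Ξ(μ) + √(−κ(v_s)/W''(v_s)) · ln(μ_s − μ)| ≤ C. -/

import Mathlib

open MeasureTheory Set

lemma aux_mono {φ φ' : ℝ → ℝ} {α β : ℝ}
    (hd : ∀ x ∈ Set.Icc α β, HasDerivAt φ (φ' x) x)
    (h0 : ∀ x ∈ Set.Icc α β, 0 ≤ φ' x) :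
    MonotoneOn φ (Set.Icc α β) := by
  refine monotoneOn_of_deriv_nonneg (convex_Icc α β)
    (fun x hx => (hd x hx).continuousAt.continuousWithinAt) ?_ ?_
  · intro x hx
    rw [interior_Icc] at hx
    exact (hd x (Set.mem_Icc_of_Ioo hx)).differentiableAt.differentiableWithinAt
  · intro x hx
    rw [interior_Icc] at hx
    rw [(hd x (Set.mem_Icc_of_Ioo hx)).deriv]
    exact h0 x (Set.mem_Icc_of_Ioo hx)

lemma aux_ge {φ φ' : ℝ → ℝ} {α β : ℝ}
    (hd : ∀ x ∈ Set.Icc α β, HasDerivAt φ (φ' x) x)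
    (h0 : ∀ x ∈ Set.Icc α β, 0 ≤ φ' x)
    (hα : 0 ≤ φ α) : ∀ x ∈ Set.Icc α β, 0 ≤ φ x := by
  intro x hx
  have hαβ : α ≤ β := le_trans hx.1 hx.2
  exact hα.trans (aux_mono hd h0 (Set.left_mem_Icc.2 hαβ) hx hx.1)

lemma sqrt_diff_le {x y : ℝ} (hy : 0 < y) : |Real.sqrt x - Real.sqrt y| ≤ |x - y| / Real.sqrt y := by
  have hsy : 0 < Real.sqrt y := Real.sqrt_pos.2 hy
  rw [le_div_iff₀ hsy]
  rcases le_or_gt x 0 with hx | hx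
  · rw [Real.sqrt_eq_zero'.mpr hx, zero_sub, abs_neg, abs_of_nonneg (Real.sqrt_nonneg y),
      abs_of_nonpos (by linarith : x - y ≤ 0), Real.mul_self_sqrt hy.le]
    linarith
  · have key : (Real.sqrt x - Real.sqrt y) * (Real.sqrt x + Real.sqrt y) = x - y := by
      have h1 : Real.sqrt x * Real.sqrt x = x := Real.mul_self_sqrt hx.le
      have h2 : Real.sqrt y * Real.sqrt y = y := Real.mul_self_sqrt hy.le
      nlinarith [h1, h2]
    calc |Real.sqrt x - Real.sqrt y| * Real.sqrt y
        ≤ |Real.sqrt x - Real.sqrt y| * (Real.sqrt x + Real.sqrt y) :=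
          mul_le_mul_of_nonneg_left (le_add_of_nonneg_left (Real.sqrt_nonneg x)) (abs_nonneg _)
      _ = |(Real.sqrt x - Real.sqrt y) * (Real.sqrt x + Real.sqrt y)| := by
          rw [abs_mul, abs_of_nonneg (by positivity : (0:ℝ) ≤ Real.sqrt x + Real.sqrt y)]
      _ = |x - y| := by rw [key]

lemma integrable_of_bound {f g : ℝ → ℝ} {α β : ℝ} (hαβ : α ≤ β)
    (hf : ContinuousOn f (Set.Ioo α β))
    (hg : IntervalIntegrable g volume α β)
    (hbound : ∀ x ∈ Set.Ioc α β, |f x| ≤ g x) :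
    IntervalIntegrable f volume α β := by
  rw [intervalIntegrable_iff_integrableOn_Ioc_of_le hαβ]
  have hmeas : AEStronglyMeasurable f (volume.restrict (Set.Ioc α β)) := by
    rw [← MeasureTheory.Measure.restrict_congr_set MeasureTheory.Ioo_ae_eq_Ioc]
    exact hf.aestronglyMeasurable measurableSet_Ioo
  refine MeasureTheory.Integrable.mono'
    ((intervalIntegrable_iff_integrableOn_Ioc_of_le hαβ).1 hg) hmeas ?_
  filter_upwards [MeasureTheory.ae_restrict_mem measurableSet_Ioc] with x hx
  rw [Real.norm_eq_abs]; exact hbound x hx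

lemma integrable_inv_sqrt_sub (α β : ℝ) :
    IntervalIntegrable (fun x => (x - α) ^ (-(1/2) : ℝ)) volume α β := by
  have h := (intervalIntegral.intervalIntegrable_rpow' (a := 0) (b := β - α)
    (by norm_num : (-1:ℝ) < -(1/2))).comp_sub_right α
  simpa using h

lemma integrable_inv_sqrt_sub' (α β : ℝ) :
    IntervalIntegrable (fun x => (β - x) ^ (-(1/2) : ℝ)) volume α β := by
  have h := (intervalIntegral.intervalIntegrable_rpow' (a := 0) (b := β - α)
    (by norm_num : (-1:ℝ) < -(1/2))).comp_sub_left β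
  simpa using h.symm

lemma rpow_neg_half_eq {x : ℝ} (hx : 0 < x) : x ^ (-(1/2):ℝ) = 1 / Real.sqrt x := by
  rw [Real.rpow_neg hx.le, Real.sqrt_eq_rpow]; simp


lemma div_le_div_of_nonneg_right' {x y z : ℝ} (h : x ≤ y) (hz : 0 < z) : x / z ≤ y / z := by
  gcongr

lemma hasDerivAt_linear (b q x : ℝ) : HasDerivAt (fun y : ℝ => b*(y-q)) b x := by
  simpa using ((hasDerivAt_id x).sub_const q).const_mul b

lemma hasDerivAt_sq (b q x : ℝ) : HasDerivAt (fun y : ℝ => b*(y-q)^2) (2*b*(x-q)) x := by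
  have h := (((hasDerivAt_id x).sub_const q).pow 2).const_mul b
  refine h.congr_deriv ?_
  simp only [id]
  push_cast
  ring

lemma hasDerivAt_cube (b q x : ℝ) : HasDerivAt (fun y : ℝ => b*(y-q)^3) (3*b*(x-q)^2) x := by
  have h := (((hasDerivAt_id x).sub_const q).pow 3).const_mul b
  refine h.congr_deriv ?_
  simp only [id]
  push_cast
  ring

set_option maxHeartbeats 4000000 in
/-- Soliton limit of the period:
`Ξ(μ) = -√(-κ(vₛ)/W''(vₛ)) ln(μₛ - μ) + O(1)` as `μ → μₛ⁻`. -/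
theorem soliton_limit_of_period
    (A B : ℝ) (hAB : A < B) (W : ℝ → ℝ)
    (hW : ContDiffOn ℝ (⊤ : ℕ∞) W (Set.Ioo A B))
    (vs v₀ vS : ℝ)
    (hmems : vs ∈ Set.Ioo A B) (hmem0 : v₀ ∈ Set.Ioo A B) (hmemS : vS ∈ Set.Ioo A B)
    (horder1 : vs < v₀) (horder2 : v₀ < vS)
    (hds : deriv W vs = 0) (hd0 : deriv W v₀ = 0)
    (hs2 : deriv (deriv W) vs < 0) (h02 : 0 < deriv (deriv W) v₀)
    (hneg : ∀ v ∈ Set.Ioo vs v₀, deriv W v < 0)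
    (hpos : ∀ v ∈ Set.Ioc v₀ vS, 0 < deriv W v)
    (hμs : W vs = W vS) (hμ0 : W v₀ < W vs)
    (v₂ v₃ : ℝ → ℝ)
    (hv : ∀ μ ∈ Set.Ioo (W v₀) (W vs),
      v₂ μ ∈ Set.Ioo vs v₀ ∧ v₃ μ ∈ Set.Ioo v₀ vS ∧ W (v₂ μ) = μ ∧ W (v₃ μ) = μ)
    (κ : ℝ → ℝ) (hκ : ContDiffOn ℝ (⊤ : ℕ∞) κ (Set.Ioo A B))
    (hκpos : ∀ v ∈ Set.Ioo A B, 0 < κ v) :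
    ∃ μbar ∈ Set.Ioo (W v₀) (W vs), ∃ C > (0:ℝ), ∀ μ ∈ Set.Ioo μbar (W vs),
      |(∫ v in Set.Ioo (v₂ μ) (v₃ μ), Real.sqrt (2 * κ v / (μ - W v)))
        + Real.sqrt (-κ vs / deriv (deriv W) vs) * Real.log (W vs - μ)| ≤ C := by
  have hSopen : IsOpen (Set.Ioo A B) := isOpen_Ioo
  have hone : (1 : WithTop ℕ∞) ≤ ((⊤:ℕ∞) : WithTop ℕ∞) := by
    exact_mod_cast (le_top : (1:ℕ∞) ≤ ⊤)
  have hsucc : ((⊤:ℕ∞) : WithTop ℕ∞) + 1 ≤ ((⊤:ℕ∞) : WithTop ℕ∞) := le_of_eq rfl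
  -- smoothness chain
  have hW1 : ContDiffOn ℝ (⊤:ℕ∞) (deriv W) (Set.Ioo A B) := hW.deriv_of_isOpen hSopen hsucc
  have hW2 : ContDiffOn ℝ (⊤:ℕ∞) (deriv (deriv W)) (Set.Ioo A B) := hW1.deriv_of_isOpen hSopen hsucc
  have hW3 : ContDiffOn ℝ (⊤:ℕ∞) (deriv (deriv (deriv W))) (Set.Ioo A B) :=
    hW2.deriv_of_isOpen hSopen hsucc
  have hκ1 : ContDiffOn ℝ (⊤:ℕ∞) (deriv κ) (Set.Ioo A B) := hκ.deriv_of_isOpen hSopen hsucc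
  have hWd : ∀ x ∈ Set.Ioo A B, HasDerivAt W (deriv W x) x := fun x hx =>
    ((hW.differentiableOn (by simp)).differentiableAt (hSopen.mem_nhds hx)).hasDerivAt
  have hW1d : ∀ x ∈ Set.Ioo A B, HasDerivAt (deriv W) (deriv (deriv W) x) x := fun x hx =>
    ((hW1.differentiableOn (by simp)).differentiableAt (hSopen.mem_nhds hx)).hasDerivAt
  have hW2d : ∀ x ∈ Set.Ioo A B, HasDerivAt (deriv (deriv W)) (deriv (deriv (deriv W)) x) x :=
    fun x hx => ((hW2.differentiableOn (by simp)).differentiableAt (hSopen.mem_nhds hx)).hasDerivAt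
  have hκd : ∀ x ∈ Set.Ioo A B, HasDerivAt κ (deriv κ x) x := fun x hx =>
    ((hκ.differentiableOn (by simp)).differentiableAt (hSopen.mem_nhds hx)).hasDerivAt
  have hWc : ContinuousOn W (Set.Ioo A B) := hW.continuousOn
  have hW1c : ContinuousOn (deriv W) (Set.Ioo A B) := hW1.continuousOn
  have hW2c : ContinuousOn (deriv (deriv W)) (Set.Ioo A B) := hW2.continuousOn
  have hW3c : ContinuousOn (deriv (deriv (deriv W))) (Set.Ioo A B) := hW3.continuousOn
  have hκc : ContinuousOn κ (Set.Ioo A B) := hκ.continuousOn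
  have hκ1c : ContinuousOn (deriv κ) (Set.Ioo A B) := hκ1.continuousOn
  -- constants
  have hκvs : 0 < κ vs := hκpos vs hmems
  set a : ℝ := -(deriv (deriv W) vs) / 2 with ha_def
  have ha : 0 < a := by rw [ha_def]; linarith
  have hg2vs : deriv (deriv W) vs = -(2*a) := by rw [ha_def]; ring
  set c : ℝ := Real.sqrt (-κ vs / deriv (deriv W) vs) with hc_def
  have hcval : -κ vs / deriv (deriv W) vs = κ vs / (2*a) := by
    rw [hg2vs, div_neg, neg_div, neg_neg]
  have hc : 0 < c := by
    rw [hc_def]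
    exact Real.sqrt_pos.2 (by rw [hcval]; positivity)
  have hc2 : c^2 = κ vs/(2*a) := by
    rw [hc_def, Real.sq_sqrt (by rw [hcval]; positivity), hcval]
  have hkey : Real.sqrt (2*κ vs) = 2*Real.sqrt a*c := by
    have hsa2 : (Real.sqrt a)^2 = a := Real.sq_sqrt ha.le
    have h1 : (2*Real.sqrt a*c)^2 = 2*κ vs := by
      rw [mul_pow, mul_pow, hsa2, hc2]
      field_simp
    rw [← h1, Real.sqrt_sq (by positivity)]
  clear_value c
  -- choice of δ
  have hg2ca : ContinuousAt (deriv (deriv W)) vs := hW2c.continuousAt (hSopen.mem_nhds hmems)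
  have hκca : ContinuousAt κ vs := hκc.continuousAt (hSopen.mem_nhds hmems)
  have hev1 : ∀ᶠ x in nhds vs, deriv (deriv W) x < -a := by
    apply hg2ca.eventually_lt continuousAt_const
    rw [hg2vs]; linarith
  have hev2 : ∀ᶠ x in nhds vs, κ vs / 2 < κ x :=
    (continuousAt_const (y := κ vs / 2)).eventually_lt hκca (by linarith)
  have hev3 : ∀ᶠ x in nhds vs, x ∈ Set.Ioo A B := hSopen.eventually_mem hmems
  have hev4 : ∀ᶠ x in nhds vs, x < v₀ := isOpen_Iio.eventually_mem horder1
  obtain ⟨r, hr, hball⟩ := Metric.eventually_nhds_iff.1 ((hev1.and hev2).and (hev3.and hev4))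
  set δ : ℝ := r / 2 with hδ_def
  have hδpos : 0 < δ := by positivity
  set m : ℝ := vs + δ with hm_def
  have hJprop : ∀ x ∈ Set.Icc vs m, (deriv (deriv W) x < -a ∧ κ vs / 2 < κ x)
      ∧ x ∈ Set.Ioo A B ∧ x < v₀ := by
    intro x hx
    apply hball
    rw [Real.dist_eq, abs_of_nonneg (by linarith [hx.1] : (0:ℝ) ≤ x - vs)]
    have := hx.2; rw [hm_def] at this
    linarith
  have hJsub : Set.Icc vs m ⊆ Set.Ioo A B := fun x hx => (hJprop x hx).2.1
  have hvsm : vs < m := by rw [hm_def]; linarith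
  have hm0 : m < v₀ := (hJprop m ⟨hvsm.le, le_refl m⟩).2.2
  clear_value δ m
  -- compact bounds
  obtain ⟨M3, hM3⟩ := isCompact_Icc.exists_bound_of_continuousOn (hW3c.mono hJsub)
  have hM3_0 : 0 ≤ M3 := le_trans (norm_nonneg _) (hM3 vs ⟨le_refl vs, hvsm.le⟩)
  obtain ⟨Mκ, hMκ⟩ := isCompact_Icc.exists_bound_of_continuousOn (hκ1c.mono hJsub)
  have hMκ0 : 0 ≤ Mκ := le_trans (norm_nonneg _) (hMκ vs ⟨le_refl vs, hvsm.le⟩)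
  have hvsS : vs < vS := lt_trans horder1 horder2
  have hIccS : Set.Icc vs vS ⊆ Set.Ioo A B := fun x hx =>
    ⟨lt_of_lt_of_le hmems.1 hx.1, lt_of_le_of_lt hx.2 hmemS.2⟩
  obtain ⟨MG, hMG⟩ := isCompact_Icc.exists_bound_of_continuousOn (hW1c.mono hIccS)
  have hMG0 : 0 ≤ MG := le_trans (norm_nonneg _) (hMG vs ⟨le_refl vs, hvsS.le⟩)
  obtain ⟨xK, hxKm, hxK⟩ := isCompact_Icc.exists_isMaxOn (Set.nonempty_Icc.2 hvsS.le)
    (hκc.mono hIccS)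
  set K : ℝ := κ xK with hK_def
  have hK : ∀ v ∈ Set.Icc vs vS, κ v ≤ K := fun v hv' => isMaxOn_iff.1 hxK v hv'
  have hKpos : 0 < K := lt_of_lt_of_le hκvs (hK vs ⟨le_refl vs, hvsS.le⟩)
  clear_value K
  set p : ℝ := (v₀ + vS)/2 with hp_def
  have hp1 : v₀ < p := by rw [hp_def]; linarith
  have hp2 : p < vS := by rw [hp_def]; linarith
  have hIccp : Set.Icc p vS ⊆ Set.Ioo A B := fun x hx =>
    ⟨lt_trans hmem0.1 (lt_of_lt_of_le hp1 hx.1), lt_of_le_of_lt hx.2 hmemS.2⟩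
  obtain ⟨xm, hxmm, hxm⟩ := isCompact_Icc.exists_isMinOn (Set.nonempty_Icc.2 hp2.le)
    (hW1c.mono hIccp)
  set m₁ : ℝ := deriv W xm with hm₁_def
  have hm₁pos : 0 < m₁ := hpos xm ⟨lt_of_lt_of_le hp1 hxmm.1, hxmm.2⟩
  have hm₁le : ∀ v ∈ Set.Icc p vS, m₁ ≤ deriv W v := fun v hv' => isMinOn_iff.1 hxm v hv'
  clear_value m₁
  -- monotonicity of W
  have hIcc0 : Set.Icc vs v₀ ⊆ Set.Ioo A B := fun x hx =>
    ⟨lt_of_lt_of_le hmems.1 hx.1, lt_of_le_of_lt hx.2 hmem0.2⟩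
  have hanti : StrictAntiOn W (Set.Icc vs v₀) :=
    strictAntiOn_of_deriv_neg (convex_Icc _ _) (hWc.mono hIcc0)
      (by rw [interior_Icc]; exact hneg)
  have hIcc3 : Set.Icc v₀ vS ⊆ Set.Ioo A B := fun x hx =>
    ⟨lt_of_lt_of_le hmem0.1 hx.1, lt_of_le_of_lt hx.2 hmemS.2⟩
  have hmono : StrictMonoOn W (Set.Icc v₀ vS) :=
    strictMonoOn_of_deriv_pos (convex_Icc _ _) (hWc.mono hIcc3)
      (fun x hx => by rw [interior_Icc] at hx; exact hpos x (Set.Ioo_subset_Ioc_self hx))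
  -- Taylor-type estimates on [vs, m]
  have T1 : ∀ x ∈ Set.Icc vs m, |deriv (deriv W) x - deriv (deriv W) vs| ≤ M3 * (x - vs) := by
    have hd1 : ∀ (s : ℝ), ∀ x ∈ Set.Icc vs m,
        HasDerivAt (fun y => M3*(y-vs) - s*(deriv (deriv W) y - deriv (deriv W) vs))
          (M3 - s * deriv (deriv (deriv W)) x) x := by
      intro s x hx
      have h1 : HasDerivAt (fun y : ℝ => M3*(y-vs)) M3 x := hasDerivAt_linear M3 vs x
      have h2 : HasDerivAt (fun y => s*(deriv (deriv W) y - deriv (deriv W) vs))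
          (s * deriv (deriv (deriv W)) x) x :=
        ((hW2d x (hJsub hx)).sub_const _).const_mul s
      exact h1.sub h2
    have habs : ∀ (s : ℝ), |s| = 1 → ∀ x ∈ Set.Icc vs m,
        0 ≤ M3*(x-vs) - s*(deriv (deriv W) x - deriv (deriv W) vs) := by
      intro s hs
      refine aux_ge (hd1 s) ?_ (by simp)
      intro x hx
      have := hM3 x hx
      rw [Real.norm_eq_abs] at this
      have : |s * deriv (deriv (deriv W)) x| ≤ M3 := by
        rw [abs_mul, hs, one_mul]; exact this
      have := abs_le.1 this
      linarith [this.2]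
    intro x hx
    rw [abs_le]
    constructor
    · have := habs (-1) (by norm_num) x hx; linarith
    · have := habs 1 (by norm_num) x hx; linarith
  have T2 : ∀ x ∈ Set.Icc vs m, a * (x - vs) ≤ -(deriv W x) := by
    have hd : ∀ x ∈ Set.Icc vs m, HasDerivAt (fun y => -(deriv W y) - a*(y-vs))
        (-(deriv (deriv W) x) - a) x := by
      intro x hx
      exact ((hW1d x (hJsub hx)).neg).sub (hasDerivAt_linear a vs x)
    have h0 : ∀ x ∈ Set.Icc vs m, 0 ≤ -(deriv (deriv W) x) - a := by
      intro x hx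
      have := (hJprop x hx).1.1
      linarith
    have := aux_ge hd h0 (by simp [hds])
    intro x hx
    have := this x hx
    linarith
  have T3 : ∀ x ∈ Set.Icc vs m, |(-(deriv W x)) - 2*a*(x-vs)| ≤ M3/2 * (x-vs)^2 := by
    have key : ∀ (s : ℝ), |s| = 1 → ∀ x ∈ Set.Icc vs m,
        0 ≤ M3/2*(x-vs)^2 - s*((-(deriv W x)) - 2*a*(x-vs)) := by
      intro s hs
      refine aux_ge (φ' := fun y => M3*(y-vs) - s*(-(deriv (deriv W) y) - 2*a)) ?_ ?_ (by simp [hds])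
      · intro x hx
        have h1 : HasDerivAt (fun y : ℝ => M3/2*(y-vs)^2) (M3*(x-vs)) x := by
          have := hasDerivAt_sq (M3/2) vs x
          convert this using 1
          ring
        have h2 : HasDerivAt (fun y => s*((-(deriv W y)) - 2*a*(y-vs)))
            (s*(-(deriv (deriv W) x) - 2*a)) x := by
          have ha1 : HasDerivAt (fun y => -(deriv W y)) (-(deriv (deriv W) x)) x :=
            (hW1d x (hJsub hx)).neg
          have ha2 : HasDerivAt (fun y : ℝ => 2*a*(y-vs)) (2*a) x := hasDerivAt_linear (2*a) vs x
          exact (ha1.sub ha2).const_mul s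
        exact h1.sub h2
      · intro x hx
        have h1 := T1 x hx
        rw [hg2vs] at h1
        have h2 := abs_le.1 h1
        rcases abs_eq (by norm_num : (0:ℝ) ≤ 1) |>.1 hs with h | h
        · subst h; simp only [one_mul]; linarith [h2.2]
        · subst h; simp only [neg_one_mul, neg_sub]; linarith [h2.1]
    intro x hx
    rw [abs_le]
    constructor
    · have := key (-1) (by norm_num) x hx; linarith
    · have := key 1 (by norm_num) x hx; linarith
  have T5 : ∀ x ∈ Set.Icc vs m, |(W vs - W x) - a*(x-vs)^2| ≤ M3/6 * (x-vs)^3 := by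
    have key : ∀ (s : ℝ), |s| = 1 → ∀ x ∈ Set.Icc vs m,
        0 ≤ M3/6*(x-vs)^3 - s*((W vs - W x) - a*(x-vs)^2) := by
      intro s hs
      refine aux_ge (φ' := fun y => M3/2*(y-vs)^2 - s*((-(deriv W y)) - 2*a*(y-vs))) ?_ ?_
        (by simp)
      · intro x hx
        have h1 : HasDerivAt (fun y : ℝ => M3/6*(y-vs)^3) (M3/2*(x-vs)^2) x := by
          have := hasDerivAt_cube (M3/6) vs x
          convert this using 1
          ring
        have h2 : HasDerivAt (fun y => s*((W vs - W y) - a*(y-vs)^2))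
            (s*((-(deriv W x)) - 2*a*(x-vs))) x := by
          have ha1 : HasDerivAt (fun y => W vs - W y) (-(deriv W x)) x :=
            (hWd x (hJsub hx)).const_sub (W vs)
          exact (ha1.sub (hasDerivAt_sq a vs x)).const_mul s
        exact h1.sub h2
      · intro x hx
        have h2 := abs_le.1 (T3 x hx)
        rcases (abs_eq (by norm_num : (0:ℝ) ≤ 1)).1 hs with h | h
        · subst h; simp only [one_mul]; linarith [h2.2]
        · subst h; simp only [neg_one_mul, neg_sub]; linarith [h2.1]
    intro x hx
    rw [abs_le]
    constructor
    · have := key (-1) (by norm_num) x hx; linarith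
    · have := key 1 (by norm_num) x hx; linarith
  have T6 : ∀ x ∈ Set.Icc vs m, |κ x - κ vs| ≤ Mκ * (x - vs) := by
    have key : ∀ (s : ℝ), |s| = 1 → ∀ x ∈ Set.Icc vs m,
        0 ≤ Mκ*(x-vs) - s*(κ x - κ vs) := by
      intro s hs
      refine aux_ge (φ' := fun y => Mκ - s*(deriv κ y)) ?_ ?_ (by simp)
      · intro x hx
        exact (hasDerivAt_linear Mκ vs x).sub (((hκd x (hJsub hx)).sub_const _).const_mul s)
      · intro x hx
        have h1 := hMκ x hx
        rw [Real.norm_eq_abs] at h1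
        have h2 : |s * deriv κ x| ≤ Mκ := by rw [abs_mul, hs, one_mul]; exact h1
        show 0 ≤ Mκ - s * deriv κ x
        linarith [(abs_le.1 h2).2]
    intro x hx
    rw [abs_le]
    constructor
    · have := key (-1) (by norm_num) x hx; linarith
    · have := key 1 (by norm_num) x hx; linarith
  have TU : MonotoneOn (fun x => (W vs - W x) - a/2*(x-vs)^2) (Set.Icc vs m) := by
    refine aux_mono (φ' := fun y => (-(deriv W y)) - a*(y-vs)) ?_ ?_
    · intro x hx
      have h1 : HasDerivAt (fun y => W vs - W y) (-(deriv W x)) x :=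
        (hWd x (hJsub hx)).const_sub (W vs)
      have h2 : HasDerivAt (fun y : ℝ => a/2*(y-vs)^2) (a*(x-vs)) x := by
        have := hasDerivAt_sq (a/2) vs x
        convert this using 1
        ring
      exact h1.sub h2
    · intro x hx
      show 0 ≤ (-(deriv W x)) - a*(x-vs)
      linarith [T2 x hx]
  have hUlow : ∀ x ∈ Set.Icc vs m, a/2*(x-vs)^2 ≤ W vs - W x := by
    intro x hx
    have := TU (Set.left_mem_Icc.2 (le_trans hx.1 hx.2)) hx hx.1
    simp only [sub_self] at this
    linarith [this]
  -- remainder bound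
  set L : ℝ := 2*Mκ/Real.sqrt (2*κ vs) + c*(5*M3/6)/Real.sqrt (a/2) with hL_def
  have hL0 : 0 ≤ L := by
    apply add_nonneg
    · exact div_nonneg (by linarith) (Real.sqrt_nonneg _)
    · exact div_nonneg (mul_nonneg hc.le (by linarith)) (Real.sqrt_nonneg _)
  have TR : ∀ x ∈ Set.Ioc vs m,
      |Real.sqrt (2*κ x) - c * (-(deriv W x)) / Real.sqrt (W vs - W x)| ≤ L * (x - vs) := by
    intro x hx
    have hxI : x ∈ Set.Icc vs m := ⟨hx.1.le, hx.2⟩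
    have ht : 0 < x - vs := by linarith [hx.1]
    have hu_low := hUlow x hxI
    have hu_pos : 0 < W vs - W x := lt_of_lt_of_le (by positivity) hu_low
    have hsu_pos : 0 < Real.sqrt (W vs - W x) := Real.sqrt_pos.2 hu_pos
    have hsa_pos : 0 < Real.sqrt a := Real.sqrt_pos.2 ha
    have hsa2 : Real.sqrt a * Real.sqrt a = a := Real.mul_self_sqrt ha.le
    have hsau : Real.sqrt (a/2) * (x-vs) ≤ Real.sqrt (W vs - W x) := by
      have h1 : Real.sqrt (a/2*(x-vs)^2) ≤ Real.sqrt (W vs - W x) := Real.sqrt_le_sqrt hu_low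
      rwa [Real.sqrt_mul (by positivity) ((x-vs)^2), Real.sqrt_sq ht.le] at h1
    have hsa2_pos : 0 < Real.sqrt (a/2) := Real.sqrt_pos.2 (by positivity)
    -- step 1
    have hstep1 : |Real.sqrt (2*κ x) - Real.sqrt (2*κ vs)| ≤ 2*Mκ/Real.sqrt (2*κ vs) * (x-vs) := by
      have h1 := sqrt_diff_le (x := 2*κ x) (y := 2*κ vs) (by positivity)
      have h2 : |2*κ x - 2*κ vs| ≤ 2*Mκ*(x-vs) := by
        rw [show (2:ℝ)*κ x - 2*κ vs = 2*(κ x - κ vs) by ring, abs_mul, abs_two]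
        linarith [T6 x hxI]
      have hs2κ : 0 < Real.sqrt (2*κ vs) := Real.sqrt_pos.2 (by positivity)
      have h3 : |2*κ x - 2*κ vs|/Real.sqrt (2*κ vs) ≤ (2*Mκ*(x-vs))/Real.sqrt (2*κ vs) :=
        div_le_div_of_nonneg_right' h2 hs2κ
      refine le_trans h1 (le_trans h3 (le_of_eq (by ring)))
    -- step 2
    have hA3 : |2*Real.sqrt a*Real.sqrt (W vs - W x) - 2*a*(x-vs)| ≤ M3/3*(x-vs)^2 := by
      have hat : Real.sqrt (a*(x-vs)^2) = Real.sqrt a * (x-vs) := by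
        rw [Real.sqrt_mul ha.le, Real.sqrt_sq ht.le]
      have hd1 : |Real.sqrt (W vs - W x) - Real.sqrt a * (x-vs)|
          ≤ (M3/6*(x-vs)^3)/(Real.sqrt a*(x-vs)) := by
        have h0 := sqrt_diff_le (x := W vs - W x) (y := a*(x-vs)^2) (by positivity)
        rw [hat] at h0
        refine le_trans h0 ?_
        exact div_le_div_of_nonneg_right' (T5 x hxI) (mul_pos hsa_pos ht)
      calc |2*Real.sqrt a*Real.sqrt (W vs - W x) - 2*a*(x-vs)|
          = 2*Real.sqrt a*|Real.sqrt (W vs - W x) - Real.sqrt a*(x-vs)| := by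
            rw [show 2*Real.sqrt a*Real.sqrt (W vs - W x) - 2*a*(x-vs)
                = (2*Real.sqrt a)*(Real.sqrt (W vs - W x) - Real.sqrt a*(x-vs)) by
              linear_combination (2*(x-vs)) * hsa2]
            rw [abs_mul, abs_of_nonneg (by positivity : (0:ℝ) ≤ 2*Real.sqrt a)]
        _ ≤ 2*Real.sqrt a*((M3/6*(x-vs)^3)/(Real.sqrt a*(x-vs))) := by gcongr
        _ = M3/3*(x-vs)^2 := by field_simp; ring
    have hA4 : |(-(deriv W x)) - 2*Real.sqrt a*Real.sqrt (W vs - W x)| ≤ (5*M3/6)*(x-vs)^2 := by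
      have htri := abs_sub_le (-(deriv W x)) (2*a*(x-vs)) (2*Real.sqrt a*Real.sqrt (W vs - W x))
      have h1 := T3 x hxI
      have h2 : |2*a*(x-vs) - 2*Real.sqrt a*Real.sqrt (W vs - W x)| ≤ M3/3*(x-vs)^2 := by
        rw [abs_sub_comm]; exact hA3
      calc |(-(deriv W x)) - 2*Real.sqrt a*Real.sqrt (W vs - W x)|
          ≤ |(-(deriv W x)) - 2*a*(x-vs)| + |2*a*(x-vs) - 2*Real.sqrt a*Real.sqrt (W vs - W x)| :=
            htri
        _ ≤ M3/2*(x-vs)^2 + M3/3*(x-vs)^2 := add_le_add h1 h2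
        _ = (5*M3/6)*(x-vs)^2 := by ring
    have hA5 : |c*(-(deriv W x))/Real.sqrt (W vs - W x) - Real.sqrt (2*κ vs)|
        ≤ c*(5*M3/6)/Real.sqrt (a/2) * (x-vs) := by
      have heq : c*(-(deriv W x))/Real.sqrt (W vs - W x) - Real.sqrt (2*κ vs)
          = c*((-(deriv W x)) - 2*Real.sqrt a*Real.sqrt (W vs - W x))/Real.sqrt (W vs - W x) := by
        rw [hkey]
        field_simp
      rw [heq, abs_div, abs_mul, abs_of_nonneg hc.le,
        abs_of_nonneg hsu_pos.le]
      calc c*|(-(deriv W x)) - 2*Real.sqrt a*Real.sqrt (W vs - W x)|/Real.sqrt (W vs - W x)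
          ≤ c*((5*M3/6)*(x-vs)^2)/(Real.sqrt (a/2)*(x-vs)) := by
            refine div_le_div₀ (by positivity) (mul_le_mul_of_nonneg_left hA4 hc.le)
              (mul_pos hsa2_pos ht) hsau
        _ = c*(5*M3/6)/Real.sqrt (a/2) * (x-vs) := by field_simp
    calc |Real.sqrt (2*κ x) - c * (-(deriv W x)) / Real.sqrt (W vs - W x)|
        ≤ |Real.sqrt (2*κ x) - Real.sqrt (2*κ vs)|
          + |Real.sqrt (2*κ vs) - c * (-(deriv W x)) / Real.sqrt (W vs - W x)| :=
          abs_sub_le _ _ _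
      _ ≤ 2*Mκ/Real.sqrt (2*κ vs) * (x-vs) + c*(5*M3/6)/Real.sqrt (a/2) * (x-vs) := by
          refine add_le_add hstep1 ?_
          rw [abs_sub_comm]
          exact hA5
      _ = L * (x - vs) := by rw [hL_def]; ring
  clear_value L
  -- thresholds and constants
  set η₁ : ℝ := W vs - W m with hη₁_def
  have hη₁ : 0 < η₁ := by
    have := hanti (Set.left_mem_Icc.2 horder1.le) ⟨hvsm.le, hm0.le⟩ hvsm
    rw [hη₁_def]; linarith
  set η₂ : ℝ := W vs - W p with hη₂_def
  have hη₂ : 0 < η₂ := by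
    have hWp : W p < W vS := hmono ⟨hp1.le, hp2.le⟩ ⟨horder2.le, le_refl vS⟩ hp2
    rw [hη₂_def, hμs]; linarith
  set ε₀ : ℝ := min η₁ (min η₂ (W vs - W v₀)) / 2 with hε₀_def
  have hε₀ : 0 < ε₀ := by
    rw [hε₀_def]
    exact div_pos (lt_min hη₁ (lt_min hη₂ (by linarith))) two_pos
  have hε₀η₁ : 2*ε₀ ≤ η₁ := by
    rw [hε₀_def]; linarith [min_le_left η₁ (min η₂ (W vs - W v₀))]
  have hε₀η₂ : 2*ε₀ ≤ η₂ := by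
    rw [hε₀_def]
    linarith [min_le_right η₁ (min η₂ (W vs - W v₀)), min_le_left η₂ (W vs - W v₀)]
  have hε₀μ0 : 2*ε₀ ≤ W vs - W v₀ := by
    rw [hε₀_def]
    linarith [min_le_right η₁ (min η₂ (W vs - W v₀)), min_le_right η₂ (W vs - W v₀)]
  clear_value ε₀ η₁ η₂
  set μbar : ℝ := W vs - ε₀ with hμbar_def
  set CF : ℝ := 2*c*(|Real.log (Real.sqrt η₁)| + |Real.log (2*Real.sqrt η₁)|) with hCF_def
  have hCF0 : 0 ≤ CF := by rw [hCF_def]; positivity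
  set C : ℝ := CF + (2*L/a)*Real.sqrt η₁ + Real.sqrt (2*K/ε₀)*(p - m)
    + (2*Real.sqrt (2*K)/m₁)*Real.sqrt η₂ + 1 with hC_def
  have hterm2 : 0 ≤ (2*L/a)*Real.sqrt η₁ :=
    mul_nonneg (div_nonneg (by linarith) ha.le) (Real.sqrt_nonneg _)
  have hterm3 : 0 ≤ Real.sqrt (2*K/ε₀)*(p - m) :=
    mul_nonneg (Real.sqrt_nonneg _) (by linarith [lt_trans hm0 hp1])
  have hterm4 : 0 ≤ (2*Real.sqrt (2*K)/m₁)*Real.sqrt η₂ :=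
    mul_nonneg (div_nonneg (by positivity) hm₁pos.le) (Real.sqrt_nonneg _)
  have hC : 0 < C := by rw [hC_def]; linarith
  refine ⟨μbar, ⟨by rw [hμbar_def]; linarith, by rw [hμbar_def]; linarith⟩, C, hC, ?_⟩
  -- per-μ estimate
  intro μ hμ
  obtain ⟨hμ1, hμ2⟩ := hμ
  have hμbar_lt : W v₀ < μbar := by rw [hμbar_def]; linarith
  have hμmem : μ ∈ Set.Ioo (W v₀) (W vs) := ⟨lt_trans hμbar_lt hμ1, hμ2⟩
  obtain ⟨h2mem, h3mem, hW2eq, hW3eq⟩ := hv μ hμmem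
  have hεpos : (0:ℝ) < W vs - μ := by linarith
  have hεε₀ : W vs - μ < ε₀ := by rw [hμbar_def] at hμ1; linarith
  have hμ1' : W vs - ε₀ < μ := by rw [hμbar_def] at hμ1; exact hμ1
  have hv2s : vs < v₂ μ := h2mem.1
  have hv20 : v₂ μ < v₀ := h2mem.2
  have hv30 : v₀ < v₃ μ := h3mem.1
  have hv3S : v₃ μ < vS := h3mem.2
  have hWm_eq : W m = W vs - η₁ := by rw [hη₁_def]; ring
  have hWp_eq : W p = W vs - η₂ := by rw [hη₂_def]; ring
  have h2m : v₂ μ < m := by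
    by_contra h
    push_neg at h
    have hle : W (v₂ μ) ≤ W m := by
      rcases eq_or_lt_of_le h with he | hlt
      · rw [he]
      · exact (hanti ⟨hvsm.le, hm0.le⟩ ⟨(lt_trans hvsm hlt).le, hv20.le⟩ hlt).le
    rw [hW2eq, hWm_eq] at hle
    linarith
  have hp3 : p < v₃ μ := by
    by_contra h
    push_neg at h
    have hle : W (v₃ μ) ≤ W p := by
      rcases eq_or_lt_of_le h with he | hlt
      · rw [he]
      · exact (hmono ⟨hv30.le, le_trans h hp2.le⟩ ⟨hp1.le, hp2.le⟩ hlt).le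
    rw [hW3eq, hWp_eq] at hle
    linarith
  have hsub2 : Set.Ioc (v₂ μ) m ⊆ Set.Icc vs m := fun v hv' => ⟨(lt_trans hv2s hv'.1).le, hv'.2⟩
  have hpos1 : ∀ v ∈ Set.Ioc (v₂ μ) m, 0 < μ - W v := by
    intro v hv'
    have h1 : W v < W (v₂ μ) :=
      hanti ⟨hv2s.le, hv20.le⟩ ⟨(lt_trans hv2s hv'.1).le, le_trans hv'.2 hm0.le⟩ hv'.1
    rw [hW2eq] at h1
    linarith
  have hposu : ∀ v ∈ Set.Ioc (v₂ μ) m, 0 < W vs - W v := by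
    intro v hv'
    have := hpos1 v hv'
    linarith
  have hpos2 : ∀ v ∈ Set.Icc m p, ε₀ ≤ μ - W v := by
    intro v hv'
    rcases le_or_gt v v₀ with h | h
    · have hle : W v ≤ W m := by
        rcases eq_or_lt_of_le hv'.1 with he | hlt
        · rw [← he]
        · exact (hanti ⟨hvsm.le, hm0.le⟩ ⟨le_trans hvsm.le hv'.1, h⟩ hlt).le
      rw [hWm_eq] at hle
      linarith
    · have hle : W v ≤ W p := by
        rcases eq_or_lt_of_le hv'.2 with he | hlt
        · rw [he]
        · exact (hmono ⟨h.le, le_trans hv'.2 hp2.le⟩ ⟨hp1.le, hp2.le⟩ hlt).le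
      rw [hWp_eq] at hle
      linarith
  have hmono_p : MonotoneOn (fun x => W x - m₁ * x) (Set.Icc p vS) := by
    refine aux_mono (φ' := fun y => deriv W y - m₁) ?_ ?_
    · intro x hx
      have h2 : HasDerivAt (fun y : ℝ => m₁*y) m₁ x := by
        simpa using (hasDerivAt_id x).const_mul m₁
      exact (hWd x (hIccp hx)).sub h2
    · intro x hx
      show 0 ≤ deriv W x - m₁
      linarith [hm₁le x hx]
  have hpos3 : ∀ v ∈ Set.Icc p (v₃ μ), m₁*(v₃ μ - v) ≤ μ - W v := by
    intro v hv'
    have h1 := hmono_p ⟨hv'.1, le_trans hv'.2 hv3S.le⟩ ⟨hp3.le, hv3S.le⟩ hv'.2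
    simp only [hW3eq] at h1
    linarith
  have hlow_q : ∀ v ∈ Set.Ioc (v₂ μ) m, a*(v - v₂ μ)*(v₂ μ - vs) ≤ μ - W v := by
    intro v hv'
    have h2I : v₂ μ ∈ Set.Icc vs m := ⟨hv2s.le, h2m.le⟩
    have hvI : v ∈ Set.Icc vs m := hsub2 hv'
    have hTUle := TU h2I hvI hv'.1.le
    simp only [hW2eq] at hTUle
    linarith [hTUle, mul_nonneg ha.le (sq_nonneg (v - v₂ μ))]
  -- notation
  set f : ℝ → ℝ := fun v => Real.sqrt (2 * κ v / (μ - W v)) with hf_def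
  set fm : ℝ → ℝ := fun v =>
    c*(-(deriv W v))/(Real.sqrt (W vs - W v)*Real.sqrt (μ - W v)) with hfm_def
  set F : ℝ → ℝ := fun v =>
    2*c*Real.log (Real.sqrt (W vs - W v) + Real.sqrt (μ - W v)) with hF_def
  have hd₂ : 0 < v₂ μ - vs := by linarith
  have hsubAB : Set.Ioc (v₂ μ) m ⊆ Set.Ioo A B := fun v hv' => hJsub (hsub2 hv')
  have hsubOO : Set.Ioo (v₂ μ) m ⊆ Set.Ioc (v₂ μ) m := Set.Ioo_subset_Ioc_self
  have hsubIcc : Set.Icc (v₂ μ) m ⊆ Set.Ioo A B := fun v hv' =>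
    hJsub ⟨le_trans hv2s.le hv'.1, hv'.2⟩
  have hIccvS : Set.Icc vs m ⊆ Set.Icc vs vS := fun v hv' =>
    ⟨hv'.1, le_trans hv'.2 (lt_trans hm0 horder2).le⟩
  have hfval : ∀ v ∈ Set.Ioc (v₂ μ) m, f v = Real.sqrt (2*κ v)/Real.sqrt (μ - W v) := by
    intro v hv'
    rw [hf_def]
    exact Real.sqrt_div (by linarith [hκpos v (hsubAB hv')]) _
  have hQ : ∀ v ∈ Set.Ioc (v₂ μ) m,
      Real.sqrt (a*(v₂ μ - vs))*Real.sqrt (v - v₂ μ) ≤ Real.sqrt (μ - W v) := by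
    intro v hv'
    have h1 : Real.sqrt (a*(v - v₂ μ)*(v₂ μ - vs)) ≤ Real.sqrt (μ - W v) :=
      Real.sqrt_le_sqrt (hlow_q v hv')
    rwa [show a*(v - v₂ μ)*(v₂ μ - vs) = (a*(v₂ μ - vs))*(v - v₂ μ) by ring,
      Real.sqrt_mul (mul_nonneg ha.le hd₂.le)] at h1
  have hQpos : 0 < Real.sqrt (a*(v₂ μ - vs)) := Real.sqrt_pos.2 (mul_pos ha hd₂)
  have husall : ∀ v ∈ Set.Icc (v₂ μ) m, W vs - μ ≤ W vs - W v := by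
    intro v hv'
    rcases eq_or_lt_of_le hv'.1 with he | hlt
    · rw [← he, hW2eq]
    · linarith [hpos1 v ⟨hlt, hv'.2⟩]
  have hT2' : ∀ v ∈ Set.Icc vs m, 0 ≤ -(deriv W v) := by
    intro v hv'
    have := T2 v hv'
    linarith [mul_nonneg ha.le (sub_nonneg.2 hv'.1)]
  have hMG' : ∀ v ∈ Set.Icc vs m, -(deriv W v) ≤ MG := by
    intro v hv'
    have := hMG v (hIccvS hv')
    rw [Real.norm_eq_abs] at this
    linarith [(abs_le.1 this).1]
  -- integrability of f on [v₂ μ, m]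
  have hcont_sqrtμ : ContinuousOn (fun v => Real.sqrt (μ - W v)) (Set.Ioo A B) :=
    Real.continuous_sqrt.comp_continuousOn (continuousOn_const.sub hWc)
  have hcont_sqrts : ContinuousOn (fun v => Real.sqrt (W vs - W v)) (Set.Ioo A B) :=
    Real.continuous_sqrt.comp_continuousOn (continuousOn_const.sub hWc)
  have hIoosub : Set.Ioo (v₂ μ) m ⊆ Set.Ioo A B := fun v hv' => hsubAB (hsubOO hv')
  have hIf2 : IntervalIntegrable f volume (v₂ μ) m := by
    refine integrable_of_bound h2m.le ?_
      ((integrable_inv_sqrt_sub (v₂ μ) m).const_mul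
        (Real.sqrt (2*K)/Real.sqrt (a*(v₂ μ - vs)))) ?_
    · rw [hf_def]
      exact Real.continuous_sqrt.comp_continuousOn
        (((continuousOn_const.mul (hκc.mono hIoosub)).div
          (continuousOn_const.sub (hWc.mono hIoosub)))
          (fun v hv' => (hpos1 v (hsubOO hv')).ne'))
    · intro v hv'
      have hvv2 : 0 < v - v₂ μ := by linarith [hv'.1]
      rw [abs_of_nonneg (by rw [hf_def]; exact Real.sqrt_nonneg _), rpow_neg_half_eq hvv2,
        hfval v hv']
      have hnum : Real.sqrt (2*κ v) ≤ Real.sqrt (2*K) :=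
        Real.sqrt_le_sqrt (by linarith [hK v (hIccvS (hsub2 hv'))])
      have hdenpos : 0 < Real.sqrt (a*(v₂ μ - vs))*Real.sqrt (v - v₂ μ) :=
        mul_pos hQpos (Real.sqrt_pos.2 hvv2)
      calc Real.sqrt (2*κ v)/Real.sqrt (μ - W v)
          ≤ Real.sqrt (2*K)/(Real.sqrt (a*(v₂ μ - vs))*Real.sqrt (v - v₂ μ)) :=
            div_le_div₀ (Real.sqrt_nonneg _) hnum hdenpos (hQ v hv')
        _ = Real.sqrt (2*K)/Real.sqrt (a*(v₂ μ - vs)) * (1/Real.sqrt (v - v₂ μ)) := by ring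
  -- integrability of fm on [v₂ μ, m]
  have hIfm : IntervalIntegrable fm volume (v₂ μ) m := by
    refine integrable_of_bound h2m.le ?_
      ((integrable_inv_sqrt_sub (v₂ μ) m).const_mul
        (c*MG/(Real.sqrt (W vs - μ)*Real.sqrt (a*(v₂ μ - vs))))) ?_
    · rw [hfm_def]
      refine (continuousOn_const.mul (hW1c.mono hIoosub).neg).div
        ((hcont_sqrts.mono hIoosub).mul (hcont_sqrtμ.mono hIoosub)) ?_
      intro v hv'
      have h1 : 0 < Real.sqrt (W vs - W v) := Real.sqrt_pos.2 (hposu v (hsubOO hv'))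
      have h2 : 0 < Real.sqrt (μ - W v) := Real.sqrt_pos.2 (hpos1 v (hsubOO hv'))
      positivity
    · intro v hv'
      have hvv2 : 0 < v - v₂ μ := by linarith [hv'.1]
      have hvIcc : v ∈ Set.Icc vs m := hsub2 hv'
      have h0 : 0 ≤ -(deriv W v) := hT2' v hvIcc
      have hε' : 0 < Real.sqrt (W vs - μ) := Real.sqrt_pos.2 hεpos
      have hden1 : Real.sqrt (W vs - μ) ≤ Real.sqrt (W vs - W v) :=
        Real.sqrt_le_sqrt (husall v ⟨hv'.1.le, hv'.2⟩)
      rw [rpow_neg_half_eq hvv2, hfm_def]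
      have habs : |c*(-(deriv W v))/(Real.sqrt (W vs - W v)*Real.sqrt (μ - W v))|
          = c*(-(deriv W v))/(Real.sqrt (W vs - W v)*Real.sqrt (μ - W v)) := by
        apply abs_of_nonneg
        apply div_nonneg (mul_nonneg hc.le h0) (mul_nonneg (Real.sqrt_nonneg _) (Real.sqrt_nonneg _))
      rw [habs]
      calc c*(-(deriv W v))/(Real.sqrt (W vs - W v)*Real.sqrt (μ - W v))
          ≤ (c*MG)/((Real.sqrt (W vs - μ))*(Real.sqrt (a*(v₂ μ - vs))*Real.sqrt (v - v₂ μ))) := by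
            refine div_le_div₀ (by positivity) ?_ ?_ ?_
            · exact mul_le_mul_of_nonneg_left (hMG' v hvIcc) hc.le
            · exact mul_pos hε' (mul_pos hQpos (Real.sqrt_pos.2 hvv2))
            · exact mul_le_mul hden1 (hQ v hv')
                (mul_nonneg hQpos.le (Real.sqrt_nonneg _)) (Real.sqrt_nonneg _)
        _ = c*MG/(Real.sqrt (W vs - μ)*Real.sqrt (a*(v₂ μ - vs))) * (1/Real.sqrt (v - v₂ μ)) := by
            ring
  -- integrability of the remainder dominator
  have hIh9 : IntervalIntegrable (fun v => (L/a)*(-(deriv W v))/Real.sqrt (μ - W v))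
      volume (v₂ μ) m := by
    refine integrable_of_bound h2m.le ?_
      ((integrable_inv_sqrt_sub (v₂ μ) m).const_mul ((L/a)*MG/Real.sqrt (a*(v₂ μ - vs)))) ?_
    · refine (continuousOn_const.mul (hW1c.mono hIoosub).neg).div (hcont_sqrtμ.mono hIoosub) ?_
      intro v hv'
      exact (Real.sqrt_pos.2 (hpos1 v (hsubOO hv'))).ne'
    · intro v hv'
      have hvv2 : 0 < v - v₂ μ := by linarith [hv'.1]
      have hvIcc : v ∈ Set.Icc vs m := hsub2 hv'
      rw [rpow_neg_half_eq hvv2,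
        abs_of_nonneg (div_nonneg (mul_nonneg (div_nonneg hL0 ha.le) (hT2' v hvIcc))
          (Real.sqrt_nonneg _))]
      calc (L/a)*(-(deriv W v))/Real.sqrt (μ - W v)
          ≤ ((L/a)*MG)/(Real.sqrt (a*(v₂ μ - vs))*Real.sqrt (v - v₂ μ)) := by
            refine div_le_div₀ (by positivity) ?_ ?_ (hQ v hv')
            · exact mul_le_mul_of_nonneg_left (hMG' v hvIcc) (div_nonneg hL0 ha.le)
            · exact mul_pos hQpos (Real.sqrt_pos.2 hvv2)
        _ = (L/a)*MG/Real.sqrt (a*(v₂ μ - vs)) * (1/Real.sqrt (v - v₂ μ)) := by ring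
  -- FTC for the model integrand
  have hFcont : ContinuousOn F (Set.Icc (v₂ μ) m) := by
    rw [hF_def]
    refine continuousOn_const.mul (ContinuousOn.log
      ((hcont_sqrts.mono hsubIcc).add (hcont_sqrtμ.mono hsubIcc)) ?_)
    intro v hv'
    have h1 : 0 < Real.sqrt (W vs - W v) :=
      Real.sqrt_pos.2 (lt_of_lt_of_le hεpos (husall v hv'))
    have h2 : 0 ≤ Real.sqrt (μ - W v) := Real.sqrt_nonneg _
    exact ne_of_gt (by linarith)
  have hFderiv : ∀ x ∈ Set.Ioo (v₂ μ) m, HasDerivWithinAt F (fm x) (Set.Ioi x) x := by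
    intro x hx
    have hxIoc : x ∈ Set.Ioc (v₂ μ) m := hsubOO hx
    have hxAB : x ∈ Set.Ioo A B := hsubAB hxIoc
    have huμ : 0 < μ - W x := hpos1 x hxIoc
    have hus : 0 < W vs - W x := hposu x hxIoc
    have h1 : HasDerivAt (fun v => W vs - W v) (-(deriv W x)) x := (hWd x hxAB).const_sub (W vs)
    have h2 : HasDerivAt (fun v => μ - W v) (-(deriv W x)) x := (hWd x hxAB).const_sub μ
    have h3 := (Real.hasDerivAt_sqrt hus.ne').comp x h1
    have h4 := (Real.hasDerivAt_sqrt huμ.ne').comp x h2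
    have hsumpos : 0 < Real.sqrt (W vs - W x) + Real.sqrt (μ - W x) :=
      add_pos (Real.sqrt_pos.2 hus) (Real.sqrt_pos.2 huμ)
    have h5 := ((h3.add h4).log hsumpos.ne').const_mul (2*c)
    rw [hfm_def]
    rw [hF_def]
    refine HasDerivAt.hasDerivWithinAt ?_
    refine h5.congr_deriv ?_
    have hs1 : Real.sqrt (W vs - W x) ≠ 0 := (Real.sqrt_pos.2 hus).ne'
    have hs2' : Real.sqrt (μ - W x) ≠ 0 := (Real.sqrt_pos.2 huμ).ne'
    simp only [Pi.add_apply, Function.comp_apply]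
    field_simp
    ring
  have hFTC1 : ∫ v in (v₂ μ)..m, fm v = F m - F (v₂ μ) :=
    intervalIntegral.integral_eq_sub_of_hasDeriv_right_of_le h2m.le hFcont hFderiv hIfm
  have hF2 : F (v₂ μ) = c * Real.log (W vs - μ) := by
    rw [hF_def]
    show 2*c*Real.log (Real.sqrt (W vs - W (v₂ μ)) + Real.sqrt (μ - W (v₂ μ)))
      = c * Real.log (W vs - μ)
    rw [hW2eq, sub_self, Real.sqrt_zero, add_zero, Real.log_sqrt (by linarith)]
    ring
  -- remainder bound
  have hRbound : ∀ v ∈ Set.Icc (v₂ μ) m,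
      |f v - fm v| ≤ (L/a)*(-(deriv W v))/Real.sqrt (μ - W v) := by
    intro v hv'
    rcases eq_or_lt_of_le hv'.1 with he | hlt
    · rw [← he, hf_def, hfm_def]
      simp [hW2eq]
    · have hvIoc : v ∈ Set.Ioc (v₂ μ) m := ⟨hlt, hv'.2⟩
      have h1 : Real.sqrt (W vs - W v) ≠ 0 := (Real.sqrt_pos.2 (hposu v hvIoc)).ne'
      have h2 : Real.sqrt (μ - W v) ≠ 0 := (Real.sqrt_pos.2 (hpos1 v hvIoc)).ne'
      have hsplitv : f v - fm v
          = (Real.sqrt (2*κ v) - c*(-(deriv W v))/Real.sqrt (W vs - W v))/Real.sqrt (μ - W v) := by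
        rw [hfval v hvIoc, hfm_def]
        show Real.sqrt (2*κ v)/Real.sqrt (μ - W v)
            - c*(-(deriv W v))/(Real.sqrt (W vs - W v)*Real.sqrt (μ - W v)) = _
        field_simp
      rw [hsplitv, abs_div, abs_of_nonneg (Real.sqrt_nonneg (μ - W v))]
      refine div_le_div_of_nonneg_right' ?_ (Real.sqrt_pos.2 (hpos1 v hvIoc))
      refine le_trans (TR v ⟨lt_trans hv2s hlt, hv'.2⟩) ?_
      calc L*(v-vs) = (L/a)*(a*(v-vs)) := by field_simp
        _ ≤ (L/a)*(-(deriv W v)) :=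
          mul_le_mul_of_nonneg_left (T2 v (hsub2 hvIoc)) (div_nonneg hL0 ha.le)
  -- FTC for the remainder dominator
  have hFTC2 : ∫ v in (v₂ μ)..m, (L/a)*(-(deriv W v))/Real.sqrt (μ - W v)
      = (2*L/a)*Real.sqrt (μ - W m) := by
    have := intervalIntegral.integral_eq_sub_of_hasDeriv_right_of_le h2m.le
      (f := fun v => (2*L/a)*Real.sqrt (μ - W v)) ?_ ?_ hIh9
    · simp only [hW2eq, sub_self, Real.sqrt_zero, mul_zero, sub_zero] at this
      exact this
    · exact continuousOn_const.mul (hcont_sqrtμ.mono hsubIcc)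
    · intro x hx
      have hxIoc : x ∈ Set.Ioc (v₂ μ) m := hsubOO hx
      have huμ : 0 < μ - W x := hpos1 x hxIoc
      have h2 : HasDerivAt (fun v => μ - W v) (-(deriv W x)) x :=
        (hWd x (hsubAB hxIoc)).const_sub μ
      have h4 := ((Real.hasDerivAt_sqrt huμ.ne').comp x h2).const_mul (2*L/a)
      refine HasDerivAt.hasDerivWithinAt ?_
      refine h4.congr_deriv ?_
      have hs2' : Real.sqrt (μ - W x) ≠ 0 := (Real.sqrt_pos.2 huμ).ne'
      field_simp
  -- left piece conclusion
  have hμWm : μ - W m ≤ η₁ := by rw [hWm_eq]; linarith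
  have hIleft : |(∫ v in (v₂ μ)..m, f v) - F m + c*Real.log (W vs - μ)| ≤ 2*L/a*Real.sqrt η₁ := by
    have hdiff := intervalIntegral.integral_sub hIf2 hIfm
    have heq2 : (∫ v in (v₂ μ)..m, f v) - F m + c*Real.log (W vs - μ)
        = ∫ v in (v₂ μ)..m, (f v - fm v) := by
      rw [hdiff, hFTC1, hF2]
      ring
    rw [heq2]
    refine le_trans (intervalIntegral.abs_integral_le_integral_abs h2m.le) ?_
    refine le_trans (intervalIntegral.integral_mono_on h2m.le (hIf2.sub hIfm).abs hIh9 hRbound) ?_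
    rw [hFTC2]
    have : Real.sqrt (μ - W m) ≤ Real.sqrt η₁ := Real.sqrt_le_sqrt hμWm
    have h2L : 0 ≤ 2*L/a := div_nonneg (by linarith) ha.le
    calc (2*L/a)*Real.sqrt (μ - W m) ≤ (2*L/a)*Real.sqrt η₁ :=
        mul_le_mul_of_nonneg_left this h2L
      _ = 2*L/a*Real.sqrt η₁ := by ring
  -- middle piece
  have hmp : m ≤ p := (lt_trans hm0 hp1).le
  have hIccmpAB : Set.Icc m p ⊆ Set.Ioo A B := fun v hv' =>
    hIccS ⟨le_trans hvsm.le hv'.1, le_trans hv'.2 hp2.le⟩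
  have hIccmpS : Set.Icc m p ⊆ Set.Icc vs vS := fun v hv' =>
    ⟨le_trans hvsm.le hv'.1, le_trans hv'.2 hp2.le⟩
  have hfmid_cont : ContinuousOn f (Set.Icc m p) := by
    rw [hf_def]
    exact Real.continuous_sqrt.comp_continuousOn
      (((continuousOn_const.mul (hκc.mono hIccmpAB)).div
        (continuousOn_const.sub (hWc.mono hIccmpAB)))
        (fun v hv' => ne_of_gt (lt_of_lt_of_le hε₀ (hpos2 v hv'))))
  have hIm : IntervalIntegrable f volume m p := hfmid_cont.intervalIntegrable_of_Icc hmp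
  have hfmid_bd : ∀ v ∈ Set.Icc m p, f v ≤ Real.sqrt (2*K/ε₀) := by
    intro v hv'
    rw [hf_def]
    apply Real.sqrt_le_sqrt
    exact div_le_div₀ (by positivity) (by linarith [hK v (hIccmpS hv')]) hε₀ (hpos2 v hv')
  have hImid : |∫ v in m..p, f v| ≤ Real.sqrt (2*K/ε₀)*(p-m) := by
    refine le_trans (intervalIntegral.abs_integral_le_integral_abs hmp) ?_
    have h1 := intervalIntegral.integral_mono_on hmp hIm.abs
      (intervalIntegrable_const (c := Real.sqrt (2*K/ε₀)))
      (fun v hv' => by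
        rw [abs_of_nonneg (by rw [hf_def]; exact Real.sqrt_nonneg _)]
        exact hfmid_bd v hv')
    rw [intervalIntegral.integral_const, smul_eq_mul] at h1
    linarith [h1]
  -- tail piece
  have hpv₃ : p ≤ v₃ μ := hp3.le
  have hIccpv₃AB : Set.Icc p (v₃ μ) ⊆ Set.Ioo A B := fun v hv' =>
    hIccp ⟨hv'.1, le_trans hv'.2 hv3S.le⟩
  have hIoopv₃AB : Set.Ioo p (v₃ μ) ⊆ Set.Ioo A B := fun v hv' =>
    hIccpv₃AB ⟨hv'.1.le, hv'.2.le⟩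
  have hpos_t : ∀ v ∈ Set.Ico p (v₃ μ), 0 < μ - W v := fun v hv' =>
    lt_of_lt_of_le (mul_pos hm₁pos (by linarith [hv'.2])) (hpos3 v ⟨hv'.1, hv'.2.le⟩)
  have hW'_t : ∀ v ∈ Set.Icc p (v₃ μ), 0 < deriv W v := fun v hv' =>
    hpos v ⟨lt_of_lt_of_le hp1 hv'.1, le_trans hv'.2 hv3S.le⟩
  have hMG_t : ∀ v ∈ Set.Icc p (v₃ μ), deriv W v ≤ MG := by
    intro v hv'
    have := hMG v ⟨le_trans hvsm.le (le_trans hmp hv'.1), le_trans hv'.2 hv3S.le⟩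
    rw [Real.norm_eq_abs] at this
    linarith [(abs_le.1 this).2]
  have hQt : ∀ v ∈ Set.Ico p (v₃ μ),
      Real.sqrt m₁ * Real.sqrt (v₃ μ - v) ≤ Real.sqrt (μ - W v) := by
    intro v hv'
    have h1 : Real.sqrt (m₁*(v₃ μ - v)) ≤ Real.sqrt (μ - W v) :=
      Real.sqrt_le_sqrt (hpos3 v ⟨hv'.1, hv'.2.le⟩)
    rwa [Real.sqrt_mul hm₁pos.le] at h1
  have hm₁s : 0 < Real.sqrt m₁ := Real.sqrt_pos.2 hm₁pos
  have hIf3 : IntervalIntegrable f volume p (v₃ μ) := by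
    refine integrable_of_bound hpv₃ ?_
      ((integrable_inv_sqrt_sub' p (v₃ μ)).const_mul (Real.sqrt (2*K)/Real.sqrt m₁)) ?_
    · rw [hf_def]
      exact Real.continuous_sqrt.comp_continuousOn
        (((continuousOn_const.mul (hκc.mono hIoopv₃AB)).div
          (continuousOn_const.sub (hWc.mono hIoopv₃AB)))
          (fun v hv' => (hpos_t v ⟨hv'.1.le, hv'.2⟩).ne'))
    · intro v hv'
      rcases eq_or_lt_of_le hv'.2 with he | hlt
      · rw [he, hf_def]
        simp [hW3eq, Real.zero_rpow (by norm_num : (-(1/2):ℝ) ≠ 0)]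
      · have hvv3 : 0 < v₃ μ - v := by linarith
        have hvAB : v ∈ Set.Ioo A B := hIccpv₃AB ⟨hv'.1.le, hv'.2⟩
        have hfv : f v = Real.sqrt (2*κ v)/Real.sqrt (μ - W v) := by
          rw [hf_def]
          exact Real.sqrt_div (by linarith [hκpos v hvAB]) _
        rw [abs_of_nonneg (by rw [hf_def]; exact Real.sqrt_nonneg _), rpow_neg_half_eq hvv3, hfv]
        have hnum : Real.sqrt (2*κ v) ≤ Real.sqrt (2*K) :=
          Real.sqrt_le_sqrt (by
            have := hK v ⟨le_trans hvsm.le (le_trans hmp hv'.1.le), (lt_trans hlt hv3S).le⟩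
            linarith)
        calc Real.sqrt (2*κ v)/Real.sqrt (μ - W v)
            ≤ Real.sqrt (2*K)/(Real.sqrt m₁*Real.sqrt (v₃ μ - v)) :=
              div_le_div₀ (Real.sqrt_nonneg _) hnum
                (mul_pos hm₁s (Real.sqrt_pos.2 hvv3)) (hQt v ⟨hv'.1.le, hlt⟩)
          _ = Real.sqrt (2*K)/Real.sqrt m₁ * (1/Real.sqrt (v₃ μ - v)) := by ring
  have hIt9 : IntervalIntegrable (fun v => (Real.sqrt (2*K)/m₁)*(deriv W v)/Real.sqrt (μ - W v))
      volume p (v₃ μ) := by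
    refine integrable_of_bound hpv₃ ?_
      ((integrable_inv_sqrt_sub' p (v₃ μ)).const_mul ((Real.sqrt (2*K)/m₁)*MG/Real.sqrt m₁)) ?_
    · refine (continuousOn_const.mul (hW1c.mono hIoopv₃AB)).div
        ((hcont_sqrtμ.mono hIoopv₃AB)) ?_
      intro v hv'
      exact (Real.sqrt_pos.2 (hpos_t v ⟨hv'.1.le, hv'.2⟩)).ne'
    · intro v hv'
      rcases eq_or_lt_of_le hv'.2 with he | hlt
      · rw [he]
        simp [hW3eq, Real.zero_rpow (by norm_num : (-(1/2):ℝ) ≠ 0)]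
      · have hvv3 : 0 < v₃ μ - v := by linarith
        have hvIcc : v ∈ Set.Icc p (v₃ μ) := ⟨hv'.1.le, hv'.2⟩
        rw [rpow_neg_half_eq hvv3,
          abs_of_nonneg (div_nonneg (mul_nonneg (div_nonneg (Real.sqrt_nonneg _) hm₁pos.le)
            (hW'_t v hvIcc).le) (Real.sqrt_nonneg _))]
        calc (Real.sqrt (2*K)/m₁)*(deriv W v)/Real.sqrt (μ - W v)
            ≤ ((Real.sqrt (2*K)/m₁)*MG)/(Real.sqrt m₁*Real.sqrt (v₃ μ - v)) := by
              refine div_le_div₀ (by positivity) ?_ ?_ (hQt v ⟨hv'.1.le, hlt⟩)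
              · exact mul_le_mul_of_nonneg_left (hMG_t v hvIcc)
                  (div_nonneg (Real.sqrt_nonneg _) hm₁pos.le)
              · exact mul_pos hm₁s (Real.sqrt_pos.2 hvv3)
          _ = (Real.sqrt (2*K)/m₁)*MG/Real.sqrt m₁ * (1/Real.sqrt (v₃ μ - v)) := by ring
  have hFTC3 : ∫ v in p..(v₃ μ), (Real.sqrt (2*K)/m₁)*(deriv W v)/Real.sqrt (μ - W v)
      = (2*Real.sqrt (2*K)/m₁)*Real.sqrt (μ - W p) := by
    have h := intervalIntegral.integral_eq_sub_of_hasDeriv_right_of_le hpv₃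
      (f := fun v => -(2*Real.sqrt (2*K)/m₁)*Real.sqrt (μ - W v)) ?_ ?_ hIt9
    · simp only [hW3eq, sub_self, Real.sqrt_zero, mul_zero] at h
      rw [h]
      ring
    · exact continuousOn_const.mul (hcont_sqrtμ.mono hIccpv₃AB)
    · intro x hx
      have huμ : 0 < μ - W x := hpos_t x ⟨hx.1.le, hx.2⟩
      have h2 : HasDerivAt (fun v => μ - W v) (-(deriv W x)) x :=
        (hWd x (hIoopv₃AB hx)).const_sub μ
      have h4 := ((Real.hasDerivAt_sqrt huμ.ne').comp x h2).const_mul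
        (-(2*Real.sqrt (2*K)/m₁))
      refine HasDerivAt.hasDerivWithinAt ?_
      refine h4.congr_deriv ?_
      have hs2' : Real.sqrt (μ - W x) ≠ 0 := (Real.sqrt_pos.2 huμ).ne'
      field_simp
  have htail_bd : ∀ v ∈ Set.Icc p (v₃ μ),
      |f v| ≤ (Real.sqrt (2*K)/m₁)*(deriv W v)/Real.sqrt (μ - W v) := by
    intro v hv'
    rcases eq_or_lt_of_le hv'.2 with he | hlt
    · rw [he, hf_def]
      simp [hW3eq]
    · have huμ : 0 < μ - W v := hpos_t v ⟨hv'.1, hlt⟩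
      have hvAB : v ∈ Set.Ioo A B := hIccpv₃AB hv'
      have hfv : f v = Real.sqrt (2*κ v)/Real.sqrt (μ - W v) := by
        rw [hf_def]
        exact Real.sqrt_div (by linarith [hκpos v hvAB]) _
      rw [abs_of_nonneg (by rw [hf_def]; exact Real.sqrt_nonneg _), hfv]
      have hnum : Real.sqrt (2*κ v) ≤ Real.sqrt (2*K)/m₁*(deriv W v) := by
        have h1 : Real.sqrt (2*κ v) ≤ Real.sqrt (2*K) :=
          Real.sqrt_le_sqrt (by
            have := hK v ⟨le_trans hvsm.le (le_trans hmp hv'.1), le_trans hv'.2 hv3S.le⟩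
            linarith)
        have h2 : (1:ℝ) ≤ deriv W v/m₁ := (one_le_div hm₁pos).2 (hm₁le v ⟨hv'.1, le_trans hv'.2 hv3S.le⟩)
        calc Real.sqrt (2*κ v) ≤ Real.sqrt (2*K) := h1
          _ = Real.sqrt (2*K)*1 := by ring
          _ ≤ Real.sqrt (2*K)*(deriv W v/m₁) :=
            mul_le_mul_of_nonneg_left h2 (Real.sqrt_nonneg _)
          _ = Real.sqrt (2*K)/m₁*(deriv W v) := by ring
      exact div_le_div_of_nonneg_right' hnum (Real.sqrt_pos.2 huμ)
  have hμWp : μ - W p ≤ η₂ := by rw [hWp_eq]; linarith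
  have hItail : |∫ v in p..(v₃ μ), f v| ≤ 2*Real.sqrt (2*K)/m₁*Real.sqrt η₂ := by
    refine le_trans (intervalIntegral.abs_integral_le_integral_abs hpv₃) ?_
    refine le_trans (intervalIntegral.integral_mono_on hpv₃ hIf3.abs hIt9 htail_bd) ?_
    rw [hFTC3]
    have h1 : Real.sqrt (μ - W p) ≤ Real.sqrt η₂ := Real.sqrt_le_sqrt hμWp
    have h2 : 0 ≤ 2*Real.sqrt (2*K)/m₁ := div_nonneg (by positivity) hm₁pos.le
    exact mul_le_mul_of_nonneg_left h1 h2
  -- bound on F m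
  have hFm : |F m| ≤ CF := by
    have hμm_pos : 0 ≤ μ - W m := by rw [hWm_eq]; linarith
    have hWsm : W vs - W m = η₁ := by rw [hWm_eq]; ring
    have hspos : 0 < Real.sqrt η₁ := Real.sqrt_pos.2 hη₁
    have hle_s : Real.sqrt η₁ ≤ Real.sqrt (W vs - W m) + Real.sqrt (μ - W m) := by
      rw [hWsm]
      exact le_add_of_nonneg_right (Real.sqrt_nonneg _)
    have hge_s : Real.sqrt (W vs - W m) + Real.sqrt (μ - W m) ≤ 2*Real.sqrt η₁ := by
      rw [hWsm]
      have := Real.sqrt_le_sqrt hμWm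
      linarith
    have hsum_pos : 0 < Real.sqrt (W vs - W m) + Real.sqrt (μ - W m) :=
      lt_of_lt_of_le hspos hle_s
    have hlog1 : Real.log (Real.sqrt η₁) ≤ Real.log (Real.sqrt (W vs - W m) + Real.sqrt (μ - W m)) :=
      Real.log_le_log hspos hle_s
    have hlog2 : Real.log (Real.sqrt (W vs - W m) + Real.sqrt (μ - W m)) ≤ Real.log (2*Real.sqrt η₁) :=
      Real.log_le_log hsum_pos hge_s
    have hup : 2*c*Real.log (Real.sqrt (W vs - W m) + Real.sqrt (μ - W m))
        ≤ 2*c*|Real.log (2*Real.sqrt η₁)| :=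
      mul_le_mul_of_nonneg_left (le_trans hlog2 (le_abs_self _)) (by linarith)
    have hdn : 2*c*(-(|Real.log (Real.sqrt η₁)|))
        ≤ 2*c*Real.log (Real.sqrt (W vs - W m) + Real.sqrt (μ - W m)) :=
      mul_le_mul_of_nonneg_left (le_trans (neg_abs_le _) hlog1) (by linarith)
    rw [hF_def, hCF_def]
    show |2*c*Real.log (Real.sqrt (W vs - W m) + Real.sqrt (μ - W m))|
      ≤ 2*c*(|Real.log (Real.sqrt η₁)| + |Real.log (2*Real.sqrt η₁)|)
    rw [abs_le]
    constructor
    · have h1 : 0 ≤ 2*c*|Real.log (2*Real.sqrt η₁)| :=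
        mul_nonneg (by linarith) (abs_nonneg _)
      linarith [hdn, h1]
    · have h2 : 0 ≤ 2*c*|Real.log (Real.sqrt η₁)| :=
        mul_nonneg (by linarith) (abs_nonneg _)
      linarith [hup, h2]
  -- assembly
  have hv23 : v₂ μ < v₃ μ := lt_trans hv20 hv30
  have hsplit : (∫ v in Set.Ioo (v₂ μ) (v₃ μ), f v)
      = (∫ v in (v₂ μ)..m, f v) + (∫ v in m..p, f v) + (∫ v in p..(v₃ μ), f v) := by
    have e1 := intervalIntegral.integral_add_adjacent_intervals hIm hIf3
    have e2 := intervalIntegral.integral_add_adjacent_intervals hIf2 (hIm.trans hIf3)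
    rw [← MeasureTheory.integral_Ioc_eq_integral_Ioo,
      ← intervalIntegral.integral_of_le hv23.le, ← e2, ← e1]
    ring
  rw [hsplit]
  have habs4 : |((∫ v in (v₂ μ)..m, f v) + (∫ v in m..p, f v) + (∫ v in p..(v₃ μ), f v))
      + c * Real.log (W vs - μ)|
      ≤ |(∫ v in (v₂ μ)..m, f v) - F m + c*Real.log (W vs - μ)| + |F m|
        + |∫ v in m..p, f v| + |∫ v in p..(v₃ μ), f v| := by
    have heqx : ((∫ v in (v₂ μ)..m, f v) + (∫ v in m..p, f v) + (∫ v in p..(v₃ μ), f v))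
        + c * Real.log (W vs - μ)
        = ((∫ v in (v₂ μ)..m, f v) - F m + c*Real.log (W vs - μ)) + F m
          + (∫ v in m..p, f v) + (∫ v in p..(v₃ μ), f v) := by ring
    rw [heqx]
    calc |((∫ v in (v₂ μ)..m, f v) - F m + c*Real.log (W vs - μ)) + F m
          + (∫ v in m..p, f v) + (∫ v in p..(v₃ μ), f v)|
        ≤ |((∫ v in (v₂ μ)..m, f v) - F m + c*Real.log (W vs - μ)) + F m
          + (∫ v in m..p, f v)| + |∫ v in p..(v₃ μ), f v| := abs_add_le _ _
      _ ≤ |((∫ v in (v₂ μ)..m, f v) - F m + c*Real.log (W vs - μ)) + F m|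
          + |∫ v in m..p, f v| + |∫ v in p..(v₃ μ), f v| := by
            linarith [abs_add_le (((∫ v in (v₂ μ)..m, f v) - F m + c*Real.log (W vs - μ)) + F m)
              (∫ v in m..p, f v)]
      _ ≤ |(∫ v in (v₂ μ)..m, f v) - F m + c*Real.log (W vs - μ)| + |F m|
          + |∫ v in m..p, f v| + |∫ v in p..(v₃ μ), f v| := by
            linarith [abs_add_le ((∫ v in (v₂ μ)..m, f v) - F m + c*Real.log (W vs - μ)) (F m)]
  refine le_trans habs4 ?_
  rw [hC_def]
  linarith [hIleft, hFm, hImid, hItail]
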